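/- In the erasure game where only Player A knows the state S, the max-min value of the game to Player A is 3/2, achieved by the pure strategy A = S. -/

import Mathlib

inductive ActA | a0 | ae | a1
deriving DecidableEq

instance : Fintype ActA where
  elems := {ActA.a0, ActA.ae, ActA.a1}
  complete := by intro x; cases x <;> simp

noncomputable def payoff (M : ℝ) (a : ActA) (b s : Bool) : ℝ :=
  match a with
  | .a0 => if s then -M else (if b then 0 else 3)
  | .a1 => if s then (if b then 3 else 0) else -M
  | .ae => if b = s then 0 else 1

def IsDist {α : Type*} [Fintype α] (p : α → ℝ) : Prop :=
  (∀ x, 0 ≤ p x) ∧ ∑ x, p x = 1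

/-- Expected payoff when Player A knows the uniform state but Player B does not. -/
noncomputable def expPayA (M : ℝ) (pa : Bool → ActA → ℝ) (pb : Bool → ℝ) : ℝ :=
  (1/2) * ∑ s : Bool, ∑ a : ActA, ∑ b : Bool, pa s a * pb b * payoff M a b s

/-- The pure strategy A = S. -/
noncomputable def paStar : Bool → ActA → ℝ :=
  fun s a => if a = (if s then ActA.a1 else ActA.a0) then 1 else 0

lemma sumA (f : ActA → ℝ) : ∑ a, f a = f .a0 + f .ae + f .a1 := by
  have : (Finset.univ : Finset ActA) = {ActA.a0, ActA.ae, ActA.a1} := by decide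
  rw [this]; simp [Finset.sum_insert, Finset.mem_insert]; ring

lemma expand (M : ℝ) (pa : Bool → ActA → ℝ) (pb : Bool → ℝ) :
    expPayA M pa pb = 1/2 * (pa false .a0 * pb false * 3 + pa false .ae * pb true
      + pa false .a1 * (pb false + pb true) * (-M)
      + pa true .a0 * (pb false + pb true) * (-M)
      + pa true .ae * pb false + pa true .a1 * pb true * 3) := by
  simp [expPayA, sumA, Fintype.sum_bool, payoff]; ring

/-- If only Player A knows the state, the max-min value of the erasure game is 3/2,
achieved by the pure strategy A = S (for all sufficiently large penalty M). -/
theorem stmt4 : ∃ M0 : ℝ, ∀ M ≥ M0,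
    (∀ s, IsDist (paStar s)) ∧
    (∀ pb : Bool → ℝ, IsDist pb → expPayA M paStar pb ≥ 3/2) ∧
    (∀ pa : Bool → ActA → ℝ, (∀ s, IsDist (pa s)) →
      ∃ pb : Bool → ℝ, IsDist pb ∧ expPayA M pa pb ≤ 3/2) := by
  refine ⟨0, fun M hM => ⟨?_, ?_, ?_⟩⟩
  · intro s
    constructor
    · intro x; unfold paStar; cases s <;> dsimp <;> split <;> norm_num
    · cases s <;> simp [paStar, sumA]
  · intro pb ⟨hpos, hsum⟩
    rw [Fintype.sum_bool] at hsum
    rw [expand]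
    simp [paStar]
    linarith
  · intro pa hpa
    obtain ⟨hfpos, hfsum⟩ := hpa false
    obtain ⟨htpos, htsum⟩ := hpa true
    rw [sumA] at hfsum htsum
    have h1 : 0 ≤ M * pa false .a1 := mul_nonneg hM (hfpos _)
    have h2 : 0 ≤ M * pa true .a0 := mul_nonneg hM (htpos _)
    by_cases hc : expPayA M pa (fun b => if b then 0 else 1) ≤
        expPayA M pa (fun b => if b then 1 else 0)
    · refine ⟨fun b => if b then 0 else 1, ⟨fun x => by dsimp only; split <;> norm_num,
        by rw [Fintype.sum_bool]; norm_num⟩, ?_⟩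
      simp only [expand] at hc ⊢
      simp only [if_true, if_false, Bool.false_eq_true] at hc ⊢
      ring_nf at h1 h2 hc ⊢
      linarith [hfpos ActA.a0, hfpos ActA.ae, hfpos ActA.a1, htpos ActA.a0, htpos ActA.ae, htpos ActA.a1]
    · refine ⟨fun b => if b then 1 else 0, ⟨fun x => by dsimp only; split <;> norm_num,
        by rw [Fintype.sum_bool]; norm_num⟩, ?_⟩
      push_neg at hc
      simp only [expand] at hc ⊢
      simp only [if_true, if_false, Bool.false_eq_true] at hc ⊢
      ring_nf at h1 h2 hc ⊢
      linarith [hfpos ActA.a0, hfpos ActA.ae, hfpos ActA.a1, htpos ActA.a0, htpos ActA.ae, htpos ActA.a1]
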